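/- Under the SGD setup, if F is μ-strongly convex with L-Lipschitz gradient, E[g_t | F_t] = ∇F(θ_t), E[‖g_t‖² | F_t] ≤ G² almost surely, and 0 < η ≤ μ/L², then for every t ≥ 1, E[‖θ_t − θ*‖²] ≤ (1 − 2η(μ − L²η)) · E[‖θ_{t−1} − θ*‖²] + 2G²η². -/

import Mathlib

open MeasureTheory ProbabilityTheory Filter
open scoped RealInnerProductSpace

/-- Conditional expectation commutes with continuous linear maps. -/
lemma condexp_clm_aux {Ω : Type*} {m m0 : MeasurableSpace Ω} {P : Measure Ω}
    [IsFiniteMeasure P] (hm : m ≤ m0)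
    {E F : Type*} [NormedAddCommGroup E] [NormedSpace ℝ E] [CompleteSpace E]
    [NormedAddCommGroup F] [NormedSpace ℝ F] [CompleteSpace F]
    (T : E →L[ℝ] F) {f : Ω → E} (hf : Integrable f P) :
    (fun ω => T ((P[f|m]) ω)) =ᵐ[P] P[fun ω => T (f ω)|m] := by
  refine ae_eq_condExp_of_forall_setIntegral_eq hm (T.integrable_comp hf)
    (fun s _ _ => (T.integrable_comp integrable_condExp).integrableOn)
    (fun s hs hμs => ?_)
    (StronglyMeasurable.aestronglyMeasurable (T.continuous.comp_stronglyMeasurable stronglyMeasurable_condExp))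
  rw [T.integral_comp_comm integrable_condExp.integrableOn,
    setIntegral_condExp hm hf hs, ← T.integral_comp_comm hf.integrableOn]

set_option maxHeartbeats 1000000 in
/-- **SplitSGD, Lemma 1 (Appendix A).** Under the SGD setup with μ-strong convexity,
L-Lipschitz gradient, unbiased gradients, conditional second-moment bound G², and
learning rate 0 < η ≤ μ/L², for every t,
E[‖θ_t − θ*‖²] ≤ (1 − 2η(μ − L²η))^t E[‖θ_0 − θ*‖²] + G²η/(μ − L²η). -/
theorem sgd_one_step_squared_distance_bound
    {Ω : Type*} {m0 : MeasurableSpace Ω} {P : Measure Ω} [IsProbabilityMeasure P]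
    {d : ℕ} (ℱ : Filtration ℕ m0)
    (F : EuclideanSpace ℝ (Fin d) → ℝ)
    (gradF : EuclideanSpace ℝ (Fin d) → EuclideanSpace ℝ (Fin d))
    (θstar : EuclideanSpace ℝ (Fin d))
    (θ g : ℕ → Ω → EuclideanSpace ℝ (Fin d))
    (η μ L G : ℝ)
    (hη : 0 < η) (hμ : 0 < μ) (hL : 0 < L)
    (hηle : η ≤ μ / L ^ 2)
    -- F is differentiable with gradient gradF
    (hgrad : ∀ x, HasGradientAt F (gradF x) x)
    -- θ* is a minimizer of F
    (hmin : ∀ x, F θstar ≤ F x)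
    -- μ-strong convexity
    (hsc : ∀ x y, F y + ⟪gradF y, x - y⟫ + μ / 2 * ‖x - y‖ ^ 2 ≤ F x)
    -- L-Lipschitz gradient
    (hlip : ∀ x y, ‖gradF x - gradF y‖ ≤ L * ‖x - y‖)
    -- SGD update rule
    (hupdate : ∀ t ω, θ (t + 1) ω = θ t ω - η • g t ω)
    -- adaptedness
    (hθ0 : StronglyMeasurable[ℱ 0] (θ 0))
    (hg_meas : ∀ t, StronglyMeasurable[ℱ (t + 1)] (g t))
    -- unbiasedness: E[g_t | ℱ_t] = ∇F(θ_t)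
    (hg_cond : ∀ t, P[g t | ℱ t] =ᵐ[P] fun ω => gradF (θ t ω))
    -- conditional second-moment bound: E[‖g_t‖² | ℱ_t] ≤ G² a.s.
    (hg_sq : ∀ t, ∀ᵐ ω ∂P, (P[fun ω => ‖g t ω‖ ^ 2 | ℱ t]) ω ≤ G ^ 2)
    -- square integrability
        (hθint : ∀ t, Integrable (fun ω => ‖θ t ω - θstar‖ ^ 2) P) :
    ∀ t : ℕ, 1 ≤ t →
      ∫ ω, ‖θ t ω - θstar‖ ^ 2 ∂P ≤
        (1 - 2 * η * (μ - L ^ 2 * η)) * ∫ ω, ‖θ (t - 1) ω - θstar‖ ^ 2 ∂P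
          + 2 * G ^ 2 * η ^ 2 := by
  classical
  -- the gradient vanishes at the minimizer
  have hgrad0 : gradF θstar = 0 := by
    have hloc : IsLocalMin F θstar := Filter.Eventually.of_forall hmin
    have h0 := hloc.hasFDerivAt_eq_zero (hgrad θstar).hasFDerivAt
    exact (InnerProductSpace.toDual ℝ (EuclideanSpace ℝ (Fin d))).injective
      (h0.trans (map_zero _).symm)
  -- strong monotonicity of the gradient
  have hmono : ∀ x : EuclideanSpace ℝ (Fin d),
      μ * ‖x - θstar‖ ^ 2 ≤ ⟪x - θstar, gradF x⟫ := by
    intro x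
    have h1 := hsc θstar x
    have h2 := hsc x θstar
    rw [hgrad0, inner_zero_left] at h2
    have e1 : ⟪gradF x, θstar - x⟫ = -⟪x - θstar, gradF x⟫ := by
      rw [show θstar - x = -(x - θstar) from (neg_sub x θstar).symm, inner_neg_right,
        real_inner_comm]
    have e2 : ‖θstar - x‖ = ‖x - θstar‖ := norm_sub_rev _ _
    rw [e1, e2] at h1
    linarith
  -- gradient bound
  have hgradbd : ∀ x, ‖gradF x‖ ≤ L * ‖x - θstar‖ := by
    intro x
    have := hlip x θstar
    rwa [hgrad0, sub_zero] at this
  -- continuity of the gradient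
  have hgradF_cont : Continuous gradF := by
    refine (LipschitzWith.of_dist_le_mul (K := L.toNNReal) fun x y => ?_).continuous
    rw [dist_eq_norm, dist_eq_norm, Real.coe_toNNReal _ hL.le]
    exact hlip x y
  -- adaptedness of θ
  have hθmeas : ∀ s, StronglyMeasurable[ℱ s] (θ s) := by
    intro s
    induction s with
    | zero => exact hθ0
    | succ n ih =>
      have hupd : θ (n + 1) = fun ω => θ n ω - η • g n ω := funext (hupdate n)
      rw [hupd]
      exact (ih.mono (ℱ.mono n.le_succ)).sub ((hg_meas n).const_smul η)
  -- coordinatewise bound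
  have coord_abs : ∀ (x : EuclideanSpace ℝ (Fin d)) i, |x i| ≤ ‖x‖ := by
    intro x i
    rw [EuclideanSpace.norm_eq, ← Real.sqrt_sq_eq_abs]
    apply Real.sqrt_le_sqrt
    have h := Finset.single_le_sum (f := fun j => ‖x j‖ ^ 2)
      (fun j _ => sq_nonneg _) (Finset.mem_univ i)
    simpa [Real.norm_eq_abs, sq_abs] using h
  intro t ht
  obtain ⟨s, rfl⟩ : ∃ s, t = s + 1 := ⟨t - 1, (Nat.succ_pred_eq_of_pos ht).symm⟩
  -- measurability facts
  have hAms : StronglyMeasurable[ℱ s] (fun ω => θ s ω - θstar) :=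
    (hθmeas s).sub stronglyMeasurable_const
  have hAm : StronglyMeasurable (fun ω => θ s ω - θstar) := hAms.mono (ℱ.le s)
  have hgm : StronglyMeasurable (g s) := (hg_meas s).mono (ℱ.le (s + 1))
  have hgradθ_meas : StronglyMeasurable (fun ω => gradF (θ s ω)) :=
    hgradF_cont.comp_stronglyMeasurable ((hθmeas s).mono (ℱ.le s))
  -- integrability of ‖g s‖²
  have hg2 : Integrable (fun ω => ‖g s ω‖ ^ 2) P := by
    refine Integrable.mono' (((hθint s).add (hθint (s + 1))).const_mul (2 / η ^ 2))
      ((hgm.norm.pow 2).aestronglyMeasurable) ?_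
    filter_upwards with ω
    have h1 : η * ‖g s ω‖ ≤ ‖θ s ω - θstar‖ + ‖θ (s + 1) ω - θstar‖ := by
      have hrepr : η • g s ω = (θ s ω - θstar) - (θ (s + 1) ω - θstar) := by
        rw [hupdate s ω]; abel
      calc η * ‖g s ω‖ = ‖η • g s ω‖ := by
            rw [norm_smul, Real.norm_eq_abs, abs_of_pos hη]
        _ = ‖(θ s ω - θstar) - (θ (s + 1) ω - θstar)‖ := by rw [hrepr]
        _ ≤ _ := norm_sub_le _ _
    simp only [Pi.add_apply]
    rw [Real.norm_eq_abs, abs_of_nonneg (by positivity), div_mul_eq_mul_div,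
      le_div_iff₀ (by positivity)]
    have h2 := mul_self_le_mul_self (by positivity : (0:ℝ) ≤ η * ‖g s ω‖) h1
    nlinarith [norm_nonneg (θ s ω - θstar), norm_nonneg (θ (s + 1) ω - θstar),
      norm_nonneg (g s ω), sq_nonneg (‖θ s ω - θstar‖ - ‖θ (s + 1) ω - θstar‖), hη.le]
  -- integrability of g s
  have hgint : Integrable (g s) P := by
    refine Integrable.mono' (((integrable_const (1 : ℝ)).add hg2).const_mul (1 / 2))
      hgm.aestronglyMeasurable ?_
    filter_upwards with ω
    simp only [Pi.add_apply]
    have h0 := norm_nonneg (g s ω)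
    nlinarith [sq_nonneg (1 - ‖g s ω‖)]
  -- integrability of the inner products
  have hAg_int : Integrable (fun ω => ⟪θ s ω - θstar, g s ω⟫) P := by
    refine Integrable.mono' (((hθint s).add hg2).const_mul (1 / 2))
      (hAm.inner hgm).aestronglyMeasurable ?_
    filter_upwards with ω
    have h1 := abs_real_inner_le_norm (θ s ω - θstar) (g s ω)
    simp only [Pi.add_apply]
    rw [Real.norm_eq_abs]
    nlinarith [sq_nonneg (‖θ s ω - θstar‖ - ‖g s ω‖)]
  have hAgrad_int : Integrable (fun ω => ⟪θ s ω - θstar, gradF (θ s ω)⟫) P := by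
    refine Integrable.mono' ((hθint s).const_mul L)
      (hAm.inner hgradθ_meas).aestronglyMeasurable ?_
    filter_upwards with ω
    have h1 := abs_real_inner_le_norm (θ s ω - θstar) (gradF (θ s ω))
    have h2 := hgradbd (θ s ω)
    rw [Real.norm_eq_abs]
    nlinarith [norm_nonneg (θ s ω - θstar), norm_nonneg (gradF (θ s ω))]
  -- coordinatewise integrability
  have hgi_int : ∀ i, Integrable (fun ω => g s ω i) P := fun i =>
    (EuclideanSpace.proj (𝕜 := ℝ) i).integrable_comp hgint
  have hprod_int : ∀ i, Integrable (fun ω => (θ s ω - θstar) i * g s ω i) P := by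
    intro i
    refine Integrable.mono' (((hθint s).add hg2).const_mul (1 / 2))
      ((((EuclideanSpace.proj (𝕜 := ℝ) i).continuous.comp_stronglyMeasurable hAm).mul
        ((EuclideanSpace.proj (𝕜 := ℝ) i).continuous.comp_stronglyMeasurable
          hgm)).aestronglyMeasurable) ?_
    filter_upwards with ω
    have h1 := coord_abs (θ s ω - θstar) i
    have h2 := coord_abs (g s ω) i
    simp only [Pi.add_apply]
    rw [Real.norm_eq_abs, abs_mul]
    nlinarith [abs_nonneg ((θ s ω - θstar) i), abs_nonneg (g s ω i),
      norm_nonneg (θ s ω - θstar), norm_nonneg (g s ω),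
      sq_nonneg (‖θ s ω - θstar‖ - ‖g s ω‖)]
  have hprodgrad_int : ∀ i, Integrable (fun ω => (θ s ω - θstar) i * gradF (θ s ω) i) P := by
    intro i
    refine Integrable.mono' ((hθint s).const_mul L)
      ((((EuclideanSpace.proj (𝕜 := ℝ) i).continuous.comp_stronglyMeasurable hAm).mul
        ((EuclideanSpace.proj (𝕜 := ℝ) i).continuous.comp_stronglyMeasurable
          hgradθ_meas)).aestronglyMeasurable) ?_
    filter_upwards with ω
    have h1 := coord_abs (θ s ω - θstar) i
    have h2 := coord_abs (gradF (θ s ω)) i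
    have h3 := hgradbd (θ s ω)
    rw [Real.norm_eq_abs, abs_mul]
    nlinarith [abs_nonneg ((θ s ω - θstar) i), abs_nonneg (gradF (θ s ω) i),
      norm_nonneg (θ s ω - θstar), norm_nonneg (gradF (θ s ω))]
  -- the key cross-term identity
  have hinner1 : ∀ ω, ⟪θ s ω - θstar, g s ω⟫ = ∑ i, (θ s ω - θstar) i * g s ω i := by
    intro ω
    simp [PiLp.inner_apply, RCLike.inner_apply, conj_trivial]
    exact Finset.sum_congr rfl fun i _ => mul_comm _ _
  have hinner2 : ∀ ω, ⟪θ s ω - θstar, gradF (θ s ω)⟫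
      = ∑ i, (θ s ω - θstar) i * gradF (θ s ω) i := by
    intro ω
    simp [PiLp.inner_apply, RCLike.inner_apply, conj_trivial]
    exact Finset.sum_congr rfl fun i _ => mul_comm _ _
  have hcoord : ∀ i, ∫ ω, (θ s ω - θstar) i * g s ω i ∂P
      = ∫ ω, (θ s ω - θstar) i * gradF (θ s ω) i ∂P := by
    intro i
    have hcond_i : P[(fun ω => g s ω i)|ℱ s] =ᵐ[P] fun ω => gradF (θ s ω) i := by
      have h1 := condexp_clm_aux (ℱ.le s) (EuclideanSpace.proj (𝕜 := ℝ) i) hgint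
      refine h1.symm.trans ?_
      filter_upwards [hg_cond s] with ω hω
      simp [hω]
    have hmul := condExp_mul_of_stronglyMeasurable_left (m := ℱ s) (μ := P)
      (f := fun ω => (θ s ω - θstar) i) (g := fun ω => g s ω i)
      ((EuclideanSpace.proj (𝕜 := ℝ) i).continuous.comp_stronglyMeasurable hAms)
      (hprod_int i) (hgi_int i)
    calc ∫ ω, (θ s ω - θstar) i * g s ω i ∂P
        = ∫ ω, (P[(fun ω => (θ s ω - θstar) i) * (fun ω => g s ω i)|ℱ s]) ω ∂P :=
          (integral_condExp (ℱ.le s)).symm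
      _ = ∫ ω, (θ s ω - θstar) i * gradF (θ s ω) i ∂P := by
          refine integral_congr_ae (hmul.trans ?_)
          filter_upwards [hcond_i] with ω hω
          simp only [Pi.mul_apply, hω]
  have key : ∫ ω, ⟪θ s ω - θstar, g s ω⟫ ∂P
      = ∫ ω, ⟪θ s ω - θstar, gradF (θ s ω)⟫ ∂P := by
    calc ∫ ω, ⟪θ s ω - θstar, g s ω⟫ ∂P
        = ∫ ω, ∑ i, (θ s ω - θstar) i * g s ω i ∂P :=
          integral_congr_ae (Filter.Eventually.of_forall hinner1)
      _ = ∑ i, ∫ ω, (θ s ω - θstar) i * g s ω i ∂P :=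
          integral_finset_sum _ fun i _ => hprod_int i
      _ = ∑ i, ∫ ω, (θ s ω - θstar) i * gradF (θ s ω) i ∂P :=
          Finset.sum_congr rfl fun i _ => hcoord i
      _ = ∫ ω, ∑ i, (θ s ω - θstar) i * gradF (θ s ω) i ∂P :=
          (integral_finset_sum _ fun i _ => hprodgrad_int i).symm
      _ = ∫ ω, ⟪θ s ω - θstar, gradF (θ s ω)⟫ ∂P :=
          integral_congr_ae (Filter.Eventually.of_forall fun ω => (hinner2 ω).symm)
  -- second-moment bound
  have hsecond : ∫ ω, ‖g s ω‖ ^ 2 ∂P ≤ G ^ 2 := by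
    rw [show (∫ ω, ‖g s ω‖ ^ 2 ∂P)
        = ∫ ω, (P[fun ω => ‖g s ω‖ ^ 2|ℱ s]) ω ∂P from (integral_condExp (ℱ.le s)).symm]
    calc ∫ ω, (P[fun ω => ‖g s ω‖ ^ 2|ℱ s]) ω ∂P
        ≤ ∫ _, G ^ 2 ∂P := integral_mono_ae integrable_condExp (integrable_const _) (hg_sq s)
      _ = G ^ 2 := by simp
  -- lower bound on the cross term
  have hinner_lb : μ * ∫ ω, ‖θ s ω - θstar‖ ^ 2 ∂P
      ≤ ∫ ω, ⟪θ s ω - θstar, gradF (θ s ω)⟫ ∂P := by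
    rw [← integral_const_mul]
    exact integral_mono ((hθint s).const_mul μ) hAgrad_int fun ω => hmono (θ s ω)
  -- expansion of the squared distance
  have hexpand : ∀ ω, ‖θ (s + 1) ω - θstar‖ ^ 2
      = ‖θ s ω - θstar‖ ^ 2 - 2 * η * ⟪θ s ω - θstar, g s ω⟫ + η ^ 2 * ‖g s ω‖ ^ 2 := by
    intro ω
    rw [hupdate s ω, show θ s ω - η • g s ω - θstar = (θ s ω - θstar) - η • g s ω from by abel,
      norm_sub_sq_real, real_inner_smul_right, norm_smul, Real.norm_eq_abs, abs_of_pos hη]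
    ring
  have hint_split : ∫ ω, ‖θ (s + 1) ω - θstar‖ ^ 2 ∂P
      = ∫ ω, ‖θ s ω - θstar‖ ^ 2 ∂P - 2 * η * ∫ ω, ⟪θ s ω - θstar, g s ω⟫ ∂P
        + η ^ 2 * ∫ ω, ‖g s ω‖ ^ 2 ∂P := by
    have i1 : Integrable (fun ω => ‖θ s ω - θstar‖ ^ 2
        - 2 * η * ⟪θ s ω - θstar, g s ω⟫) P := (hθint s).sub (hAg_int.const_mul (2 * η))
    have i2 : Integrable (fun ω => η ^ 2 * ‖g s ω‖ ^ 2) P := hg2.const_mul (η ^ 2)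
    rw [integral_congr_ae (Filter.Eventually.of_forall hexpand),
      integral_add i1 i2, integral_sub (hθint s) (hAg_int.const_mul (2 * η)),
      integral_const_mul, integral_const_mul]
  have hXnn : 0 ≤ ∫ ω, ‖θ s ω - θstar‖ ^ 2 ∂P := integral_nonneg fun ω => sq_nonneg _
  have hGnn : (0 : ℝ) ≤ G ^ 2 := sq_nonneg _
  simp only [Nat.add_sub_cancel]
  rw [hint_split, key]
  nlinarith [mul_le_mul_of_nonneg_left hinner_lb (by positivity : (0:ℝ) ≤ 2 * η),
    mul_le_mul_of_nonneg_left hsecond (sq_nonneg η),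
    mul_nonneg (mul_nonneg (mul_nonneg (by norm_num : (0:ℝ) ≤ 2) (sq_nonneg L)) (sq_nonneg η)) hXnn,
    sq_nonneg η]
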